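/- Monotone decrease of FA-MKMC (EM inequality): with data second-moment matrix S positive definite and current parameters (W, ψ), define B = Wᵀ(WWᵀ + diag(ψ))⁻¹, S_xz = SBᵀ, S_zz = I − BW + BS Bᵀ, and new parameters W⁺ = S_xz S_zz⁻¹ and ψ⁺ = diag(S − S_xz S_zz⁻¹ S_xzᵀ). Then L(W⁺, ψ⁺) ≤ L(W, ψ), where L(W, ψ) := log det(WWᵀ + diag(ψ)) + trace((WWᵀ + diag(ψ))⁻¹ S). -/

import Mathlib

open Matrix

noncomputable def faNegLogLik {ℓ q : ℕ} (S : Matrix (Fin ℓ) (Fin ℓ) ℝ)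
    (W : Matrix (Fin ℓ) (Fin q) ℝ) (ψ : Fin ℓ → ℝ) : ℝ :=
  Real.log (W * Wᵀ + Matrix.diagonal ψ).det +
    ((W * Wᵀ + Matrix.diagonal ψ)⁻¹ * S).trace

section Aux

lemma fa_trace_eq_sum_eigs {m : ℕ} {M : Matrix (Fin m) (Fin m) ℝ} (hM : M.IsHermitian) :
    M.trace = ∑ i, hM.eigenvalues i := by
  conv_lhs => rw [hM.spectral_theorem]
  rw [Unitary.conjStarAlgAut_apply]
  rw [trace_mul_cycle]
  rw [show star (hM.eigenvectorUnitary : Matrix (Fin m) (Fin m) ℝ) *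
      (hM.eigenvectorUnitary : Matrix (Fin m) (Fin m) ℝ) = 1 from
    Unitary.coe_star_mul_self _]
  simp [Matrix.trace, Matrix.diag]

lemma fa_log_det_le_trace {m : ℕ} {M : Matrix (Fin m) (Fin m) ℝ} (hM : M.PosDef) :
    Real.log M.det ≤ M.trace - m := by
  have h := hM.1
  have hdet : M.det = ∏ i, h.eigenvalues i := by
    simpa using h.det_eq_prod_eigenvalues
  rw [hdet, fa_trace_eq_sum_eigs h, Real.log_prod (fun i _ => (hM.eigenvalues_pos i).ne')]
  calc ∑ i, Real.log (h.eigenvalues i) ≤ ∑ i, (h.eigenvalues i - 1) :=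
        Finset.sum_le_sum fun i _ => Real.log_le_sub_one_of_pos (hM.eigenvalues_pos i)
    _ = ∑ i, h.eigenvalues i - m := by
        rw [Finset.sum_sub_distrib]; simp

lemma fa_psd_trace_nonneg {m : ℕ} {A : Matrix (Fin m) (Fin m) ℝ} (hA : A.PosSemidef) :
    0 ≤ A.trace := by
  refine Finset.sum_nonneg fun i _ => ?_
  have := hA.dotProduct_mulVec_nonneg (Pi.single i 1)
  simpa [mulVec_single, dotProduct, Pi.single_apply, Finset.sum_ite_eq] using this

lemma fa_psd_diag_nonneg {m : ℕ} {A : Matrix (Fin m) (Fin m) ℝ} (hA : A.PosSemidef) (i : Fin m) :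
    0 ≤ A i i := by
  have := hA.dotProduct_mulVec_nonneg (Pi.single i 1)
  simpa [mulVec_single, dotProduct, Pi.single_apply, Finset.sum_ite_eq] using this

open scoped MatrixOrder in
lemma fa_trace_mul_psd_nonneg {m : ℕ} {A B : Matrix (Fin m) (Fin m) ℝ}
    (hA : A.PosSemidef) (hB : B.PosSemidef) : 0 ≤ (A * B).trace := by
  have hZ : (CFC.sqrt A).PosSemidef := (CFC.sqrt_nonneg A).posSemidef
  have hZZ : CFC.sqrt A * CFC.sqrt A = A := CFC.sqrt_mul_sqrt_self A hA.nonneg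
  have h1 : (A * B).trace = (CFC.sqrt A * B * CFC.sqrt A).trace := by
    conv_lhs => rw [← hZZ]
    rw [Matrix.mul_assoc, trace_mul_comm]
  rw [h1]
  have : (CFC.sqrt A * B * CFC.sqrt A).PosSemidef := by
    have := hB.mul_mul_conjTranspose_same (CFC.sqrt A)
    have he : (CFC.sqrt A)ᴴ = CFC.sqrt A := hZ.1
    rwa [he] at this
  exact fa_psd_trace_nonneg this

lemma fa_posDef_conj_symm {m : ℕ} {X Z : Matrix (Fin m) (Fin m) ℝ} (hX : X.PosDef)
    (hZ : Zᵀ = Z) (hZdet : Z.det ≠ 0) : (Z * X * Z).PosDef := by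
  have herm : (Z * X * Z).IsHermitian := by
    have := (hX.posSemidef.mul_mul_conjTranspose_same Z).1
    simpa [conjTranspose_eq_transpose_of_trivial, hZ] using this
  refine Matrix.PosDef.of_dotProduct_mulVec_pos herm (fun x hx => ?_)
  have hinj : Function.Injective (Z.mulVec) :=
    Matrix.mulVec_injective_iff_isUnit.mpr ((Matrix.isUnit_iff_isUnit_det Z).mpr hZdet.isUnit)
  have hZx : Z *ᵥ x ≠ 0 := fun h => hx (hinj (by simpa using h))
  have key : star x ⬝ᵥ (Z * X * Z) *ᵥ x = star (Z *ᵥ x) ⬝ᵥ X *ᵥ (Z *ᵥ x) := by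
    rw [← mulVec_mulVec, ← mulVec_mulVec, dotProduct_mulVec]
    congr 1
    show star x ᵥ* Z = star (Z *ᵥ x)
    rw [← hZ, vecMul_transpose, hZ]
    simp [star]
  rw [key]
  exact hX.dotProduct_mulVec_pos hZx

open scoped MatrixOrder in
lemma fa_gibbs_ineq {m : ℕ} {X Y : Matrix (Fin m) (Fin m) ℝ} (hX : X.PosDef) (hY : Y.PosDef) :
    Real.log X.det + m ≤ Real.log Y.det + (Y⁻¹ * X).trace := by
  have hYi : (Y⁻¹).PosDef := hY.inv
  set Z := CFC.sqrt (Y⁻¹) with hZdef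
  have hZpsd : Z.PosSemidef := (CFC.sqrt_nonneg (Y⁻¹)).posSemidef
  have hZZ : Z * Z = Y⁻¹ := CFC.sqrt_mul_sqrt_self _ hYi.posSemidef.nonneg
  have hZsymm : Zᵀ = Z := by
    have h := hZpsd.1
    rw [IsHermitian, conjTranspose_eq_transpose_of_trivial] at h
    exact h
  have hdetZsq : Z.det * Z.det = (Y⁻¹).det := by rw [← det_mul, hZZ]
  have hdetYi : 0 < (Y⁻¹).det := hYi.det_pos
  have hZdet : Z.det ≠ 0 := by
    intro h; rw [h, mul_zero] at hdetZsq; exact hdetYi.ne hdetZsq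
  have hM : (Z * X * Z).PosDef := fa_posDef_conj_symm hX hZsymm hZdet
  have h1 := fa_log_det_le_trace hM
  have hdetM : (Z * X * Z).det = (Y⁻¹).det * X.det := by
    rw [det_mul, det_mul, ← hdetZsq]; ring
  have htrM : (Z * X * Z).trace = (Y⁻¹ * X).trace := by
    rw [Matrix.mul_assoc, trace_mul_comm, Matrix.mul_assoc, hZZ, ← trace_mul_comm]
  have hlog : Real.log (Z * X * Z).det = Real.log X.det - Real.log Y.det := by
    rw [hdetM, Real.log_mul hdetYi.ne' hX.det_pos.ne', Matrix.det_nonsing_inv,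
      Ring.inverse_eq_inv, Real.log_inv]
    ring
  rw [hlog, htrM] at h1
  linarith

lemma fa_log_det_le_log_det_add {m : ℕ} {A E : Matrix (Fin m) (Fin m) ℝ}
    (hA : A.PosDef) (hE : E.PosSemidef) : Real.log A.det ≤ Real.log (A + E).det := by
  have hAE : (A + E).PosDef := hA.add_posSemidef hE
  have h := fa_gibbs_ineq hA hAE
  have hinv : (A + E)⁻¹ * (A + E) = 1 := Matrix.nonsing_inv_mul _ hAE.det_pos.ne'.isUnit
  have hsplit : (A + E)⁻¹ * A = 1 - (A + E)⁻¹ * E := by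
    rw [← hinv, Matrix.mul_add]; abel
  have htr : ((A + E)⁻¹ * A).trace = m - ((A + E)⁻¹ * E).trace := by
    rw [hsplit, trace_sub, trace_one]; simp
  have hnn : 0 ≤ ((A + E)⁻¹ * E).trace := fa_trace_mul_psd_nonneg hAE.inv.posSemidef hE
  rw [htr] at h
  linarith

lemma fa_facts {ℓ q : ℕ} (W : Matrix (Fin ℓ) (Fin q) ℝ) (ψ : Fin ℓ → ℝ) (hψ : ∀ i, 0 < ψ i)
    (D Sg : Matrix (Fin ℓ) (Fin ℓ) ℝ) (B : Matrix (Fin q) (Fin ℓ) ℝ) (K : Matrix (Fin q) (Fin q) ℝ)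
    (hD : D = Matrix.diagonal ψ) (hSg : Sg = W * Wᵀ + D)
    (hB : B = Wᵀ * Sg⁻¹) (hK : K = 1 + Wᵀ * D⁻¹ * W) :
    Sg.PosDef ∧ K.PosDef ∧ K * B = Wᵀ * D⁻¹ ∧ K⁻¹ = 1 - B * W ∧ Sg.det = D.det * K.det := by
  have hDpd : D.PosDef := by rw [hD]; exact .diagonal hψ
  have hDdet : IsUnit D.det := hDpd.det_pos.ne'.isUnit
  have hDD : D * D⁻¹ = 1 := Matrix.mul_nonsing_inv _ hDdet
  have hDD' : D⁻¹ * D = 1 := Matrix.nonsing_inv_mul _ hDdet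
  have hWWt : (W * Wᵀ).PosSemidef := by
    have := Matrix.posSemidef_self_mul_conjTranspose W
    rwa [conjTranspose_eq_transpose_of_trivial] at this
  have hSgpd : Sg.PosDef := by rw [hSg]; exact Matrix.PosDef.posSemidef_add hWWt hDpd
  have hSgdet : IsUnit Sg.det := hSgpd.det_pos.ne'.isUnit
  have hSgSg : Sg * Sg⁻¹ = 1 := Matrix.mul_nonsing_inv _ hSgdet
  have hKpd : K.PosDef := by
    rw [hK]
    refine Matrix.PosDef.add_posSemidef Matrix.PosDef.one ?_
    have := hDpd.inv.posSemidef.conjTranspose_mul_mul_same W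
    rwa [conjTranspose_eq_transpose_of_trivial] at this
  have hKB : K * B = Wᵀ * D⁻¹ := by
    have expand : K * B = Wᵀ * Sg⁻¹ + Wᵀ * D⁻¹ * (W * Wᵀ) * Sg⁻¹ := by
      rw [hK, hB]
      simp only [Matrix.add_mul, Matrix.one_mul, Matrix.mul_assoc]
    have : Wᵀ * Sg⁻¹ + Wᵀ * D⁻¹ * (W * Wᵀ) * Sg⁻¹ = Wᵀ * D⁻¹ * Sg * Sg⁻¹ := by
      rw [hSg]
      simp only [Matrix.mul_add, Matrix.add_mul, Matrix.mul_assoc,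
        Matrix.nonsing_inv_mul_cancel_left _ _ hDdet]
      abel
    rw [expand, this, Matrix.mul_assoc, hSgSg, Matrix.mul_one]
  have hKC : K * (1 - B * W) = 1 := by
    have : K * (B * W) = Wᵀ * D⁻¹ * W := by rw [← Matrix.mul_assoc, hKB]
    rw [Matrix.mul_sub, Matrix.mul_one, this, hK]
    abel
  have hKinv : K⁻¹ = 1 - B * W := by
    calc K⁻¹ = K⁻¹ * (K * (1 - B * W)) := by rw [hKC, Matrix.mul_one]
    _ = 1 - B * W := by rw [← Matrix.mul_assoc, Matrix.nonsing_inv_mul _ hKpd.det_pos.ne'.isUnit, Matrix.one_mul]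
  have hdet : Sg.det = D.det * K.det := by
    have h1 : Sg = D * (1 + D⁻¹ * (W * Wᵀ)) := by
      rw [hSg, Matrix.mul_add, Matrix.mul_one, ← Matrix.mul_assoc, hDD, Matrix.one_mul]
      abel
    rw [h1, det_mul]
    congr 1
    have := Matrix.det_one_add_mul_comm (D⁻¹ * W) Wᵀ
    rw [hK]
    rw [Matrix.mul_assoc] at this
    rw [this, ← Matrix.mul_assoc]
  exact ⟨hSgpd, hKpd, hKB, hKinv, hdet⟩

lemma fa_trace_identity {ℓ q : ℕ} (S : Matrix (Fin ℓ) (Fin ℓ) ℝ)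
    (Sxz : Matrix (Fin ℓ) (Fin q) ℝ) (Szz : Matrix (Fin q) (Fin q) ℝ)
    (W : Matrix (Fin ℓ) (Fin q) ℝ) (ψ : Fin ℓ → ℝ) (hψ : ∀ i, 0 < ψ i)
    (D Sg : Matrix (Fin ℓ) (Fin ℓ) ℝ) (B : Matrix (Fin q) (Fin ℓ) ℝ) (K : Matrix (Fin q) (Fin q) ℝ)
    (hD : D = Matrix.diagonal ψ) (hSg : Sg = W * Wᵀ + D)
    (hB : B = Wᵀ * Sg⁻¹) (hK : K = 1 + Wᵀ * D⁻¹ * W) :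
    (Sg⁻¹ * S).trace =
      ((D⁻¹ * (S - W * Sxzᵀ - Sxz * Wᵀ + W * Szz * Wᵀ)).trace + Szz.trace)
        - (K * (Szz - B * Sxz - Sxzᵀ * Bᵀ + B * S * Bᵀ)).trace := by
  obtain ⟨hSgpd, hKpd, hKB, hKinv, hdet⟩ := fa_facts W ψ hψ D Sg B K hD hSg hB hK
  have hDpd : D.PosDef := by rw [hD]; exact .diagonal hψ
  have hDdet : IsUnit D.det := hDpd.det_pos.ne'.isUnit
  have hSgdet : IsUnit Sg.det := hSgpd.det_pos.ne'.isUnit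
  have hDsym : Dᵀ = D := by rw [hD]; exact Matrix.diagonal_transpose ψ
  have hSgsym : Sgᵀ = Sg := by
    rw [hSg]; simp [Matrix.transpose_add, Matrix.transpose_mul, hDsym]
  have hDinvsym : (D⁻¹)ᵀ = D⁻¹ := by rw [Matrix.transpose_nonsing_inv, hDsym]
  have hSginvsym : (Sg⁻¹)ᵀ = Sg⁻¹ := by rw [Matrix.transpose_nonsing_inv, hSgsym]
  have hKsym : Kᵀ = K := by
    rw [hK]; simp [Matrix.transpose_add, Matrix.transpose_mul, hDinvsym, Matrix.mul_assoc]
  have hBt : Bᵀ = Sg⁻¹ * W := by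
    rw [hB]; simp [Matrix.transpose_mul, hSginvsym]
  have p1 : (D⁻¹ * (W * Sxzᵀ)).trace = (D⁻¹ * (Sxz * Wᵀ)).trace := by
    calc (D⁻¹ * (W * Sxzᵀ)).trace = ((D⁻¹ * (W * Sxzᵀ))ᵀ).trace := (trace_transpose _).symm
      _ = ((Sxz * Wᵀ) * D⁻¹).trace := by
          simp [Matrix.transpose_mul, hDinvsym, Matrix.mul_assoc]
      _ = (D⁻¹ * (Sxz * Wᵀ)).trace := trace_mul_comm _ _
  have p2 : (K * (B * Sxz)).trace = (D⁻¹ * (Sxz * Wᵀ)).trace := by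
    calc (K * (B * Sxz)).trace = ((K * B) * Sxz).trace := by rw [Matrix.mul_assoc]
      _ = (Wᵀ * (D⁻¹ * Sxz)).trace := by rw [hKB, Matrix.mul_assoc]
      _ = ((D⁻¹ * Sxz) * Wᵀ).trace := trace_mul_comm _ _
      _ = (D⁻¹ * (Sxz * Wᵀ)).trace := by rw [Matrix.mul_assoc]
  have p3 : (K * (Sxzᵀ * Bᵀ)).trace = (D⁻¹ * (Sxz * Wᵀ)).trace := by
    calc (K * (Sxzᵀ * Bᵀ)).trace = ((K * (Sxzᵀ * Bᵀ))ᵀ).trace := (trace_transpose _).symm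
      _ = (B * (Sxz * K)).trace := by
          simp [Matrix.transpose_mul, hKsym, Matrix.mul_assoc]
      _ = ((Sxz * K) * B).trace := trace_mul_comm _ _
      _ = (K * (B * Sxz)).trace := by
          rw [Matrix.mul_assoc, trace_mul_comm, Matrix.mul_assoc]
      _ = (D⁻¹ * (Sxz * Wᵀ)).trace := p2
  have p4 : (K * Szz).trace = Szz.trace + (D⁻¹ * (W * (Szz * Wᵀ))).trace := by
    have : K * Szz = Szz + Wᵀ * (D⁻¹ * (W * Szz)) := by
      rw [hK]; simp [Matrix.add_mul, Matrix.mul_assoc]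
    rw [this, trace_add]
    congr 1
    calc (Wᵀ * (D⁻¹ * (W * Szz))).trace = ((D⁻¹ * (W * Szz)) * Wᵀ).trace := trace_mul_comm _ _
      _ = (D⁻¹ * (W * (Szz * Wᵀ))).trace := by rw [Matrix.mul_assoc, Matrix.mul_assoc]
  have hBtWt : Bᵀ * Wᵀ = 1 - Sg⁻¹ * D := by
    rw [hBt, Matrix.mul_assoc]
    have : W * Wᵀ = Sg - D := by rw [hSg]; abel
    rw [this, Matrix.mul_sub, Matrix.nonsing_inv_mul _ hSgdet]
  have p5 : (K * (B * (S * Bᵀ))).trace = (D⁻¹ * S).trace - (Sg⁻¹ * S).trace := by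
    calc (K * (B * (S * Bᵀ))).trace = ((K * B) * (S * Bᵀ)).trace := by rw [Matrix.mul_assoc]
      _ = (Wᵀ * (D⁻¹ * (S * Bᵀ))).trace := by rw [hKB, Matrix.mul_assoc]
      _ = ((D⁻¹ * (S * Bᵀ)) * Wᵀ).trace := trace_mul_comm _ _
      _ = (D⁻¹ * (S * (Bᵀ * Wᵀ))).trace := by rw [Matrix.mul_assoc, Matrix.mul_assoc]
      _ = (D⁻¹ * S).trace - (D⁻¹ * (S * (Sg⁻¹ * D))).trace := by
          rw [hBtWt, Matrix.mul_sub, Matrix.mul_one, Matrix.mul_sub, trace_sub]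
      _ = (D⁻¹ * S).trace - (Sg⁻¹ * S).trace := by
          congr 1
          calc (D⁻¹ * (S * (Sg⁻¹ * D))).trace = ((D⁻¹ * (S * Sg⁻¹)) * D).trace := by
                rw [Matrix.mul_assoc, Matrix.mul_assoc]
            _ = (D * (D⁻¹ * (S * Sg⁻¹))).trace := trace_mul_comm _ _
            _ = (S * Sg⁻¹).trace := by
                rw [← Matrix.mul_assoc, Matrix.mul_nonsing_inv _ hDdet, Matrix.one_mul]
            _ = (Sg⁻¹ * S).trace := trace_mul_comm _ _
  simp only [Matrix.mul_sub, Matrix.mul_add, trace_sub, trace_add, Matrix.mul_assoc] at *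
  linarith

lemma fa_decomp {ℓ q : ℕ} (S : Matrix (Fin ℓ) (Fin ℓ) ℝ)
    (Sxz : Matrix (Fin ℓ) (Fin q) ℝ) (Szz : Matrix (Fin q) (Fin q) ℝ)
    (W : Matrix (Fin ℓ) (Fin q) ℝ) (ψ : Fin ℓ → ℝ) (hψ : ∀ i, 0 < ψ i)
    (D Sg : Matrix (Fin ℓ) (Fin ℓ) ℝ) (B : Matrix (Fin q) (Fin ℓ) ℝ) (K : Matrix (Fin q) (Fin q) ℝ)
    (hD : D = Matrix.diagonal ψ) (hSg : Sg = W * Wᵀ + D)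
    (hB : B = Wᵀ * Sg⁻¹) (hK : K = 1 + Wᵀ * D⁻¹ * W) :
    faNegLogLik S W ψ =
      (Real.log D.det + (D⁻¹ * (S - W * Sxzᵀ - Sxz * Wᵀ + W * Szz * Wᵀ)).trace + Szz.trace)
      + (Real.log K.det - (K * (Szz - B * Sxz - Sxzᵀ * Bᵀ + B * S * Bᵀ)).trace) := by
  obtain ⟨hSgpd, hKpd, hKB, hKinv, hdet⟩ := fa_facts W ψ hψ D Sg B K hD hSg hB hK
  have hDpd : D.PosDef := by rw [hD]; exact .diagonal hψ
  have hfa : faNegLogLik S W ψ = Real.log Sg.det + (Sg⁻¹ * S).trace := by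
    rw [faNegLogLik, hSg, hD]
  rw [hfa, fa_trace_identity S Sxz Szz W ψ hψ D Sg B K hD hSg hB hK, hdet,
    Real.log_mul hDpd.det_pos.ne' hKpd.det_pos.ne']
  ring

lemma fa_trace_diagonal_mul {m : ℕ} (d : Fin m → ℝ) (M : Matrix (Fin m) (Fin m) ℝ) :
    (Matrix.diagonal d * M).trace = ∑ i, d i * M i i := by
  simp [Matrix.trace, Matrix.diag, Matrix.diagonal_mul]

lemma fa_scalar_step {a b e : ℝ} (ha : 0 < a) (hb : 0 < b) (he : 0 ≤ e) :
    Real.log b + b⁻¹ * b ≤ Real.log a + a⁻¹ * (b + e) := by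
  have h1 := Real.log_le_sub_one_of_pos (div_pos hb ha)
  rw [Real.log_div hb.ne' ha.ne'] at h1
  have h2 : 0 ≤ a⁻¹ * e := mul_nonneg (inv_nonneg.mpr ha.le) he
  have h3 : b / a = a⁻¹ * b := by ring
  rw [h3] at h1
  rw [inv_mul_cancel₀ hb.ne', mul_add]
  linarith

end Aux

theorem fa_em_monotone_decrease {ℓ q : ℕ}
    (S : Matrix (Fin ℓ) (Fin ℓ) ℝ) (hS : S.PosDef)
    (W : Matrix (Fin ℓ) (Fin q) ℝ) (ψ : Fin ℓ → ℝ) (hψ : ∀ i, 0 < ψ i)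
    (B : Matrix (Fin q) (Fin ℓ) ℝ)
    (hB : B = Wᵀ * (W * Wᵀ + Matrix.diagonal ψ)⁻¹)
    (Sxz : Matrix (Fin ℓ) (Fin q) ℝ) (hSxz : Sxz = S * Bᵀ)
    (Szz : Matrix (Fin q) (Fin q) ℝ)
    (hSzz : Szz = (1 : Matrix (Fin q) (Fin q) ℝ) - B * W + B * S * Bᵀ)
    (hSzzInv : IsUnit Szz.det)
    (Wplus : Matrix (Fin ℓ) (Fin q) ℝ) (hWplus : Wplus = Sxz * Szz⁻¹)
    (ψplus : Fin ℓ → ℝ) (hψplus : ψplus = (S - Sxz * Szz⁻¹ * Sxzᵀ).diag)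
    (hψpluspos : ∀ i, 0 < ψplus i) :
    faNegLogLik S Wplus ψplus ≤ faNegLogLik S W ψ := by
  have hSsym : Sᵀ = S := by
    have := hS.1
    rwa [Matrix.IsHermitian, conjTranspose_eq_transpose_of_trivial] at this
  -- old parameter objects
  set D : Matrix (Fin ℓ) (Fin ℓ) ℝ := Matrix.diagonal ψ with hDdef
  set Sg : Matrix (Fin ℓ) (Fin ℓ) ℝ := W * Wᵀ + D with hSgdef
  set K : Matrix (Fin q) (Fin q) ℝ := 1 + Wᵀ * D⁻¹ * W with hKdef
  obtain ⟨hSgpd, hKpd, hKB, hKinv, _⟩ := fa_facts W ψ hψ D Sg B K rfl rfl hB rfl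
  -- new parameter objects
  set Dp : Matrix (Fin ℓ) (Fin ℓ) ℝ := Matrix.diagonal ψplus with hDpdef
  set Sgp : Matrix (Fin ℓ) (Fin ℓ) ℝ := Wplus * Wplusᵀ + Dp with hSgpdef
  set Kp : Matrix (Fin q) (Fin q) ℝ := 1 + Wplusᵀ * Dp⁻¹ * Wplus with hKpdef
  set Bp : Matrix (Fin q) (Fin ℓ) ℝ := Wplusᵀ * Sgp⁻¹ with hBpdef
  obtain ⟨hSgppd, hKppd, hKpBp, hKpinv, _⟩ :=
    fa_facts Wplus ψplus hψpluspos Dp Sgp Bp Kp rfl rfl rfl rfl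
  -- decompositions
  have hdec1 := fa_decomp S Sxz Szz W ψ hψ D Sg B K rfl rfl hB rfl
  have hdec2 := fa_decomp S Sxz Szz Wplus ψplus hψpluspos Dp Sgp Bp Kp rfl rfl rfl rfl
  rw [hdec1, hdec2]
  -- shared symmetry facts
  have hDsym : Dᵀ = D := Matrix.diagonal_transpose ψ
  have hSgsym : Sgᵀ = Sg := by
    rw [hSgdef]; simp [Matrix.transpose_add, Matrix.transpose_mul, hDsym]
  have hSginvsym : (Sg⁻¹)ᵀ = Sg⁻¹ := by rw [Matrix.transpose_nonsing_inv, hSgsym]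
  have hBt : Bᵀ = Sg⁻¹ * W := by
    rw [hB]; simp [Matrix.transpose_mul, hSginvsym]
  have hSxzT : Sxzᵀ = B * S := by
    rw [hSxz]; simp [Matrix.transpose_mul, hSsym]
  have hBSBt : (B * S * Bᵀ).PosSemidef := by
    have := hS.posSemidef.mul_mul_conjTranspose_same B
    rwa [conjTranspose_eq_transpose_of_trivial] at this
  have hSzzpd : Szz.PosDef := by
    have h1 : Szz = K⁻¹ + B * S * Bᵀ := by rw [hSzz, hKinv]
    rw [h1]
    exact hKpd.inv.add_posSemidef hBSBt
  have hSzzsym : Szzᵀ = Szz := by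
    have := hSzzpd.1
    rwa [Matrix.IsHermitian, conjTranspose_eq_transpose_of_trivial] at this
  have hSzzinvT : (Szz⁻¹)ᵀ = Szz⁻¹ := by rw [Matrix.transpose_nonsing_inv, hSzzsym]
  have hWpSzz : Wplus * Szz = Sxz := by
    rw [hWplus]; exact Matrix.nonsing_inv_mul_cancel_right _ _ hSzzInv
  have hWpT : Wplusᵀ = Szz⁻¹ * Sxzᵀ := by
    rw [hWplus]; simp [Matrix.transpose_mul, hSzzinvT]
  have hSzzWpT : Szz * Wplusᵀ = Sxzᵀ := by
    rw [hWpT]; exact Matrix.mul_nonsing_inv_cancel_left _ _ hSzzInv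
  -- ========== Q part ==========
  have t2 : Sxz * Wplusᵀ = Sxz * Szz⁻¹ * Sxzᵀ := by rw [hWpT, ← Matrix.mul_assoc]
  have t1 : Wplus * Sxzᵀ = Sxz * Szz⁻¹ * Sxzᵀ := by rw [hWplus]
  have t3 : Wplus * Szz * Wplusᵀ = Sxz * Szz⁻¹ * Sxzᵀ := by rw [hWpSzz, t2]
  have hRp : S - Wplus * Sxzᵀ - Sxz * Wplusᵀ + Wplus * Szz * Wplusᵀ
      = S - Sxz * Szz⁻¹ * Sxzᵀ := by
    rw [t1, t2, t3]; abel
  have hdiagRp : ∀ i, (S - Sxz * Szz⁻¹ * Sxzᵀ) i i = ψplus i := by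
    intro i; rw [hψplus]; rfl
  have hE2 : ((W - Wplus) * Szz * (W - Wplus)ᵀ).PosSemidef := by
    have := hSzzpd.posSemidef.mul_mul_conjTranspose_same (W - Wplus)
    rwa [conjTranspose_eq_transpose_of_trivial] at this
  have hkey : S - W * Sxzᵀ - Sxz * Wᵀ + W * Szz * Wᵀ
      = (S - Sxz * Szz⁻¹ * Sxzᵀ) + (W - Wplus) * Szz * (W - Wplus)ᵀ := by
    have u1 : W * Szz * Wplusᵀ = W * Sxzᵀ := by rw [Matrix.mul_assoc, hSzzWpT]
    have expand : (W - Wplus) * Szz * (W - Wplus)ᵀ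
        = W * Szz * Wᵀ - W * Sxzᵀ - Sxz * Wᵀ + Sxz * Szz⁻¹ * Sxzᵀ := by
      simp only [Matrix.transpose_sub, Matrix.sub_mul, Matrix.mul_sub, u1, hWpSzz, t2]
      abel
    rw [expand]; abel
  have hDinv : D⁻¹ = Matrix.diagonal (fun i => (ψ i)⁻¹) := by
    apply Matrix.inv_eq_right_inv
    rw [hDdef, Matrix.diagonal_mul_diagonal,
      show (fun i => ψ i * (ψ i)⁻¹) = fun _ => (1:ℝ) from
        funext fun i => mul_inv_cancel₀ (hψ i).ne', Matrix.diagonal_one]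
  have hDpinv : Dp⁻¹ = Matrix.diagonal (fun i => (ψplus i)⁻¹) := by
    apply Matrix.inv_eq_right_inv
    rw [hDpdef, Matrix.diagonal_mul_diagonal,
      show (fun i => ψplus i * (ψplus i)⁻¹) = fun _ => (1:ℝ) from
        funext fun i => mul_inv_cancel₀ (hψpluspos i).ne', Matrix.diagonal_one]
  have hlogD : Real.log D.det = ∑ i, Real.log (ψ i) := by
    rw [hDdef, Matrix.det_diagonal, Real.log_prod (fun i _ => (hψ i).ne')]
  have hlogDp : Real.log Dp.det = ∑ i, Real.log (ψplus i) := by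
    rw [hDpdef, Matrix.det_diagonal, Real.log_prod (fun i _ => (hψpluspos i).ne')]
  have hQ : Real.log Dp.det + (Dp⁻¹ * (S - Wplus * Sxzᵀ - Sxz * Wplusᵀ + Wplus * Szz * Wplusᵀ)).trace
      ≤ Real.log D.det + (D⁻¹ * (S - W * Sxzᵀ - Sxz * Wᵀ + W * Szz * Wᵀ)).trace := by
    rw [hRp, hkey, hDinv, hDpinv, fa_trace_diagonal_mul, fa_trace_diagonal_mul,
      hlogD, hlogDp, ← Finset.sum_add_distrib, ← Finset.sum_add_distrib]
    refine Finset.sum_le_sum fun i _ => ?_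
    rw [Matrix.add_apply, hdiagRp i]
    exact fa_scalar_step (hψ i) (hψpluspos i) (fa_psd_diag_nonneg hE2 i)
  -- ========== r part ==========
  have hV : Szz - B * Sxz - Sxzᵀ * Bᵀ + B * S * Bᵀ = K⁻¹ := by
    have v1 : B * Sxz = B * S * Bᵀ := by rw [hSxz, ← Matrix.mul_assoc]
    have v2 : Sxzᵀ * Bᵀ = B * S * Bᵀ := by rw [hSxzT]
    rw [v1, v2, hSzz, hKinv]; abel
  have hVp : Szz - Bp * Sxz - Sxzᵀ * Bpᵀ + Bp * S * Bpᵀ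
      = K⁻¹ + (B - Bp) * S * (B - Bp)ᵀ := by
    have v1 : Bp * Sxz = Bp * S * Bᵀ := by rw [hSxz, ← Matrix.mul_assoc]
    have v2 : Sxzᵀ * Bpᵀ = B * S * Bpᵀ := by rw [hSxzT]
    have expand : (B - Bp) * S * (B - Bp)ᵀ
        = B * S * Bᵀ - B * S * Bpᵀ - Bp * S * Bᵀ + Bp * S * Bpᵀ := by
      simp only [Matrix.transpose_sub, Matrix.sub_mul, Matrix.mul_sub]
      abel
    rw [v1, v2, hSzz, hKinv, expand]; abel
  have hEr : ((B - Bp) * S * (B - Bp)ᵀ).PosSemidef := by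
    have := hS.posSemidef.mul_mul_conjTranspose_same (B - Bp)
    rwa [conjTranspose_eq_transpose_of_trivial] at this
  have hVppd : (Szz - Bp * Sxz - Sxzᵀ * Bpᵀ + Bp * S * Bpᵀ).PosDef := by
    rw [hVp]; exact hKpd.inv.add_posSemidef hEr
  have hKKi : K * K⁻¹ = 1 := Matrix.mul_nonsing_inv _ hKpd.det_pos.ne'.isUnit
  have htrKV : (K * (Szz - B * Sxz - Sxzᵀ * Bᵀ + B * S * Bᵀ)).trace = (q : ℝ) := by
    rw [hV, hKKi, trace_one]; simp
  have hgibbs := fa_gibbs_ineq hVppd hKppd.inv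
  have hKpi : (Kp⁻¹)⁻¹ = Kp := Matrix.nonsing_inv_nonsing_inv _ hKppd.det_pos.ne'.isUnit
  have hlogKpi : Real.log (Kp⁻¹).det = - Real.log Kp.det := by
    rw [Matrix.det_nonsing_inv, Ring.inverse_eq_inv, Real.log_inv]
  have hlogKi : Real.log (K⁻¹).det = - Real.log K.det := by
    rw [Matrix.det_nonsing_inv, Ring.inverse_eq_inv, Real.log_inv]
  have hmono : Real.log (K⁻¹).det ≤ Real.log (Szz - Bp * Sxz - Sxzᵀ * Bpᵀ + Bp * S * Bpᵀ).det := by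
    rw [hVp]; exact fa_log_det_le_log_det_add hKpd.inv hEr
  rw [hKpi, hlogKpi] at hgibbs
  rw [hlogKi] at hmono
  have hr : Real.log Kp.det - (Kp * (Szz - Bp * Sxz - Sxzᵀ * Bpᵀ + Bp * S * Bpᵀ)).trace
      ≤ Real.log K.det - (K * (Szz - B * Sxz - Sxzᵀ * Bᵀ + B * S * Bᵀ)).trace := by
    rw [htrKV]
    linarith
  have hQ' := add_le_add_right hQ Szz.trace
  linarith
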